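/- arXiv:0806.4422 — 5 statements merged into one kernel-verified Lean document; each statement's English description precedes it below -/
import Mathlib

section
/- The function g(q) = π² (q - q²) / sin²(πq) is convex on the open interval (0,1). -/
open Real

noncomputable def cvfF (q : ℝ) : ℝ :=
  Real.log (π * q) + Real.log (π * (1 - q)) - 2 * Real.log (Real.sin (π * q))

noncomputable def cvfF' (q : ℝ) : ℝ :=
  1 / q - 1 / (1 - q) - 2 * π * (Real.cos (π * q) / Real.sin (π * q))

noncomputable def cvfF'' (q : ℝ) : ℝ :=
  -(1 / q ^ 2) - 1 / (1 - q) ^ 2 + 2 * π ^ 2 / (Real.sin (π * q)) ^ 2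

lemma cvf_sin_pos {x : ℝ} (hx : x ∈ Set.Ioo (0 : ℝ) 1) : 0 < Real.sin (π * x) :=
  Real.sin_pos_of_pos_of_lt_pi (mul_pos pi_pos hx.1)
    (by nlinarith [pi_pos, hx.2])

lemma cvf_hasDerivAt {x : ℝ} (hx : x ∈ Set.Ioo (0 : ℝ) 1) :
    HasDerivAt cvfF (cvfF' x) x := by
  obtain ⟨hx0, hx1⟩ := hx
  have hs := cvf_sin_pos ⟨hx0, hx1⟩
  have hA : HasDerivAt (fun q : ℝ => Real.log (π * q)) ((π * 1) / (π * x)) x :=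
    ((hasDerivAt_id x).const_mul π).log (by positivity)
  have hB : HasDerivAt (fun q : ℝ => Real.log (π * (1 - q))) ((π * (0 - 1)) / (π * (1 - x))) x := by
    have h1 : HasDerivAt (fun q : ℝ => 1 - q) (0 - 1) x :=
      (hasDerivAt_const x 1).sub (hasDerivAt_id x)
    have h2 := h1.const_mul π
    refine h2.log ?_
    have : 0 < 1 - x := by linarith
    positivity
  have hsin : HasDerivAt (fun q : ℝ => Real.sin (π * q)) (Real.cos (π * x) * (π * 1)) x :=
    ((hasDerivAt_id x).const_mul π).sin
  have hC : HasDerivAt (fun q : ℝ => Real.log (Real.sin (π * q)))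
      ((Real.cos (π * x) * (π * 1)) / Real.sin (π * x)) x :=
    hsin.log hs.ne'
  have h := (hA.add hB).sub (hC.const_mul 2)
  refine h.congr_deriv (Eq.symm ?_)
  unfold cvfF'
  have h1x : (1 : ℝ) - x ≠ 0 := by linarith
  field_simp
  ring

lemma cvf_hasDerivAt2 {x : ℝ} (hx : x ∈ Set.Ioo (0 : ℝ) 1) :
    HasDerivAt cvfF' (cvfF'' x) x := by
  obtain ⟨hx0, hx1⟩ := hx
  have hs := cvf_sin_pos ⟨hx0, hx1⟩
  have hA : HasDerivAt (fun q : ℝ => 1 / q) (-(x ^ 2)⁻¹) x := by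
    simpa only [one_div] using hasDerivAt_inv hx0.ne'
  have h1 : HasDerivAt (fun q : ℝ => 1 - q) (0 - 1) x :=
    (hasDerivAt_const x 1).sub (hasDerivAt_id x)
  have hB : HasDerivAt (fun q : ℝ => 1 / (1 - q)) (-((1 - x) ^ 2)⁻¹ * (0 - 1)) x := by
    have h1x : (1 : ℝ) - x ≠ 0 := by linarith
    simpa only [one_div, Function.comp_def] using ((hasDerivAt_inv h1x).comp x h1)
  have hsin : HasDerivAt (fun q : ℝ => Real.sin (π * q)) (Real.cos (π * x) * (π * 1)) x :=
    ((hasDerivAt_id x).const_mul π).sin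
  have hcos : HasDerivAt (fun q : ℝ => Real.cos (π * q)) (-Real.sin (π * x) * (π * 1)) x :=
    ((hasDerivAt_id x).const_mul π).cos
  have hC : HasDerivAt (fun q : ℝ => Real.cos (π * q) / Real.sin (π * q))
      ((-Real.sin (π * x) * (π * 1) * Real.sin (π * x) -
        Real.cos (π * x) * (Real.cos (π * x) * (π * 1))) / (Real.sin (π * x)) ^ 2) x :=
    hcos.div hsin hs.ne'
  have h := (hA.sub hB).sub (hC.const_mul (2 * π))
  refine h.congr_deriv (Eq.symm ?_)
  unfold cvfF''
  have h1x : (1 : ℝ) - x ≠ 0 := by linarith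
  have hpyth : Real.sin (π * x) ^ 2 + Real.cos (π * x) ^ 2 = 1 := Real.sin_sq_add_cos_sq _
  have hsx : Real.sin (x * π) ≠ 0 := by rw [mul_comm]; exact hs.ne'
  have hpyth' : Real.sin (x * π) ^ 2 + Real.cos (x * π) ^ 2 = 1 := Real.sin_sq_add_cos_sq _
  field_simp
  linear_combination (-2 * π ^ 2 * x ^ 2 * (1 - x) ^ 2) * hpyth'

lemma cvf_second_nonneg {x : ℝ} (hx : x ∈ Set.Ioo (0 : ℝ) 1) : 0 ≤ cvfF'' x := by
  obtain ⟨hx0, hx1⟩ := hx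
  have hs := cvf_sin_pos ⟨hx0, hx1⟩
  have h1x : (0 : ℝ) < 1 - x := by linarith
  -- sin (π x) ≤ π x and sin (π x) = sin (π (1 - x)) ≤ π (1 - x)
  have hle1 : Real.sin (π * x) ≤ π * x := Real.sin_le (by positivity)
  have hle2 : Real.sin (π * x) ≤ π * (1 - x) := by
    have : Real.sin (π - π * x) = Real.sin (π * x) := Real.sin_pi_sub _
    calc Real.sin (π * x) = Real.sin (π - π * x) := this.symm
      _ ≤ π - π * x := Real.sin_le (by nlinarith [pi_pos])
      _ = π * (1 - x) := by ring
  have hsq1 : Real.sin (π * x) ^ 2 ≤ π ^ 2 * x ^ 2 := by nlinarith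
  have hsq2 : Real.sin (π * x) ^ 2 ≤ π ^ 2 * (1 - x) ^ 2 := by nlinarith
  have key1 : 1 / x ^ 2 ≤ π ^ 2 / Real.sin (π * x) ^ 2 := by
    rw [div_le_div_iff₀ (by positivity) (by positivity)]
    nlinarith
  have key2 : 1 / (1 - x) ^ 2 ≤ π ^ 2 / Real.sin (π * x) ^ 2 := by
    rw [div_le_div_iff₀ (by positivity) (by positivity)]
    nlinarith
  unfold cvfF''
  have : 2 * π ^ 2 / Real.sin (π * x) ^ 2
      = π ^ 2 / Real.sin (π * x) ^ 2 + π ^ 2 / Real.sin (π * x) ^ 2 := by ring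
  linarith

lemma cvf_convexOn_F : ConvexOn ℝ (Set.Ioo (0 : ℝ) 1) cvfF := by
  have hint : interior (Set.Ioo (0 : ℝ) 1) = Set.Ioo (0 : ℝ) 1 := isOpen_Ioo.interior_eq
  refine convexOn_of_hasDerivWithinAt2_nonneg (f' := cvfF') (f'' := cvfF'') (convex_Ioo 0 1)
    (fun x hx => (cvf_hasDerivAt hx).continuousAt.continuousWithinAt) ?_ ?_ ?_
  · rw [hint]; exact fun x hx => (cvf_hasDerivAt hx).hasDerivWithinAt
  · rw [hint]; exact fun x hx => (cvf_hasDerivAt2 hx).hasDerivWithinAt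
  · rw [hint]; exact fun x hx => cvf_second_nonneg hx

lemma cvf_exp_eq {x : ℝ} (hx : x ∈ Set.Ioo (0 : ℝ) 1) :
    Real.exp (cvfF x) = π ^ 2 * (x - x ^ 2) / (Real.sin (π * x)) ^ 2 := by
  obtain ⟨hx0, hx1⟩ := hx
  have hs := cvf_sin_pos ⟨hx0, hx1⟩
  have h1x : (0 : ℝ) < 1 - x := by linarith
  unfold cvfF
  rw [Real.exp_sub, Real.exp_add, Real.exp_log (by positivity), Real.exp_log (by positivity),
    two_mul, Real.exp_add, Real.exp_log hs]
  rw [sq]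
  field_simp

/-- The function `g q = π² (q - q²) / sin²(π q)` is convex on `(0,1)`. -/
theorem convexOn_cauchy_variance_factor :
    ConvexOn ℝ (Set.Ioo (0 : ℝ) 1)
      (fun q => π ^ 2 * (q - q ^ 2) / (Real.sin (π * q)) ^ 2) := by
  have himg : Convex ℝ (cvfF '' Set.Ioo (0 : ℝ) 1) := by
    rw [convex_iff_isPreconnected]
    exact isPreconnected_Ioo.image _
      (fun x hx => (cvf_hasDerivAt hx).continuousAt.continuousWithinAt)
  exact ((convexOn_exp.subset (Set.subset_univ _) himg).comp cvf_convexOn_F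
    (Real.exp_monotone.monotoneOn _)).congr fun x hx => cvf_exp_eq hx
end

section
/- The function L(q) = log(q - q²) - 2 log(sin(πq)) on (0,1) satisfies L'(1/2) = 0, and L is convex; hence q = 1/2 is the unique global minimizer of g(q) = π²(q-q²)/sin²(πq) on (0,1). -/
open Real


noncomputable def Lfun : ℝ → ℝ := fun q => Real.log (q - q ^ 2) - 2 * Real.log (Real.sin (π * q))
noncomputable def Lder : ℝ → ℝ := fun q =>
  (1 - 2 * q) / (q - q ^ 2) - 2 * (π * Real.cos (π * q) / Real.sin (π * q))

lemma aux_facts {q : ℝ} (hq : q ∈ Set.Ioo (0:ℝ) 1) :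
    0 < q - q ^ 2 ∧ 0 < Real.sin (π * q) ∧ Real.sin (π * q) < π * q ∧
      Real.sin (π * q) < π * (1 - q) := by
  obtain ⟨h0, h1⟩ := hq
  have hπ := Real.pi_pos
  have hqq : 0 < q - q ^ 2 := by nlinarith
  have hs : 0 < Real.sin (π * q) := by
    apply Real.sin_pos_of_pos_of_lt_pi (by positivity)
    nlinarith
  have hlt1 : Real.sin (π * q) < π * q := Real.sin_lt (by positivity)
  have hlt2 : Real.sin (π * q) < π * (1 - q) := by
    have : Real.sin (π * q) = Real.sin (π - π * q) := (Real.sin_pi_sub _).symm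
    rw [this]
    have := Real.sin_lt (x := π - π * q) (by nlinarith)
    calc Real.sin (π - π * q) < π - π * q := this
      _ = π * (1 - q) := by ring
  exact ⟨hqq, hs, hlt1, hlt2⟩

lemma hasDerivAt_Lfun {q : ℝ} (hq : q ∈ Set.Ioo (0:ℝ) 1) :
    HasDerivAt Lfun (Lder q) q := by
  obtain ⟨hqq, hs, -, -⟩ := aux_facts hq
  have h1 : HasDerivAt (fun q : ℝ => q - q ^ 2) (1 - 2 * q) q := by
    simpa using (hasDerivAt_id q).fun_sub (hasDerivAt_pow 2 q)
  have h2 : HasDerivAt (fun q : ℝ => Real.log (q - q ^ 2))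
      ((q - q ^ 2)⁻¹ * (1 - 2 * q)) q :=
    (Real.hasDerivAt_log hqq.ne').comp (h₂ := Real.log) q h1
  have h3 : HasDerivAt (fun q : ℝ => Real.sin (π * q)) (Real.cos (π * q) * π) q :=
    (Real.hasDerivAt_sin (π * q)).comp q (by simpa using (hasDerivAt_id q).const_mul π)
  have h4 : HasDerivAt (fun q : ℝ => Real.log (Real.sin (π * q)))
      ((Real.sin (π * q))⁻¹ * (Real.cos (π * q) * π)) q :=
    (Real.hasDerivAt_log hs.ne').comp (h₂ := Real.log) q h3
  have h5 := h2.fun_sub (h4.const_mul 2)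
  refine HasDerivAt.congr_deriv h5 ?_
  unfold Lder
  rw [div_eq_inv_mul]
  ring

lemma hasDerivAt_Lder {q : ℝ} (hq : q ∈ Set.Ioo (0:ℝ) 1) :
    HasDerivAt Lder (2 * π ^ 2 / Real.sin (π * q) ^ 2 - (1 / q ^ 2 + 1 / (1 - q) ^ 2)) q := by
  obtain ⟨hqq, hs, -, -⟩ := aux_facts hq
  obtain ⟨h0, h1'⟩ := hq
  have h1 : HasDerivAt (fun q : ℝ => q - q ^ 2) (1 - 2 * q) q := by
    simpa using (hasDerivAt_id q).fun_sub (hasDerivAt_pow 2 q)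
  have h1n : HasDerivAt (fun q : ℝ => 1 - 2 * q) (-2) q := by
    simpa using (hasDerivAt_const q (1:ℝ)).fun_sub ((hasDerivAt_id q).const_mul 2)
  have hA : HasDerivAt (fun q : ℝ => (1 - 2 * q) / (q - q ^ 2))
      (((-2) * (q - q ^ 2) - (1 - 2 * q) * (1 - 2 * q)) / (q - q ^ 2) ^ 2) q :=
    h1n.div h1 hqq.ne'
  have h3 : HasDerivAt (fun q : ℝ => Real.sin (π * q)) (Real.cos (π * q) * π) q :=
    (Real.hasDerivAt_sin (π * q)).comp q (by simpa using (hasDerivAt_id q).const_mul π)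
  have h3c : HasDerivAt (fun q : ℝ => π * Real.cos (π * q)) (π * (-Real.sin (π * q) * π)) q := by
    have : HasDerivAt (fun q : ℝ => Real.cos (π * q)) (-Real.sin (π * q) * π) q :=
      (Real.hasDerivAt_cos (π * q)).comp q (by simpa using (hasDerivAt_id q).const_mul π)
    simpa using this.const_mul π
  have hB : HasDerivAt (fun q : ℝ => π * Real.cos (π * q) / Real.sin (π * q))
      ((π * (-Real.sin (π * q) * π) * Real.sin (π * q) -
        π * Real.cos (π * q) * (Real.cos (π * q) * π)) / Real.sin (π * q) ^ 2) q :=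
    h3c.div h3 hs.ne'
  have h5 := hA.fun_sub (hB.const_mul 2)
  refine HasDerivAt.congr_deriv h5 ?_
  have hpyth : Real.sin (π * q) ^ 2 + Real.cos (π * q) ^ 2 = 1 := Real.sin_sq_add_cos_sq _
  have hq0 : q ≠ 0 := h0.ne'
  have hq1 : (1 : ℝ) - q ≠ 0 := by linarith
  have hnum : π * (-Real.sin (π * q) * π) * Real.sin (π * q) -
      π * Real.cos (π * q) * (Real.cos (π * q) * π) = -π ^ 2 := by
    linear_combination (-π ^ 2) * hpyth
  have e1 : ((-2 : ℝ) * (q - q ^ 2) - (1 - 2 * q) * (1 - 2 * q)) / (q - q ^ 2) ^ 2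
      = -(1 / q ^ 2 + 1 / (1 - q) ^ 2) := by
    rw [div_eq_iff (pow_ne_zero 2 hqq.ne')]
    field_simp
    ring
  rw [hnum, e1]
  ring

lemma Lder2_pos {q : ℝ} (hq : q ∈ Set.Ioo (0:ℝ) 1) :
    0 < 2 * π ^ 2 / Real.sin (π * q) ^ 2 - (1 / q ^ 2 + 1 / (1 - q) ^ 2) := by
  obtain ⟨hqq, hs, hlt1, hlt2⟩ := aux_facts hq
  obtain ⟨h0, h1⟩ := hq
  have h1q : (0:ℝ) < 1 - q := by linarith
  have hs2 : 0 < Real.sin (π * q) ^ 2 := by positivity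
  have e1 : 1 / q ^ 2 < π ^ 2 / Real.sin (π * q) ^ 2 := by
    rw [div_lt_div_iff₀ (by positivity) hs2]
    nlinarith
  have e2 : 1 / (1 - q) ^ 2 < π ^ 2 / Real.sin (π * q) ^ 2 := by
    rw [div_lt_div_iff₀ (by positivity) hs2]
    nlinarith
  have : 2 * π ^ 2 / Real.sin (π * q) ^ 2 = π ^ 2 / Real.sin (π * q) ^ 2 + π ^ 2 / Real.sin (π * q) ^ 2 := by
    ring
  linarith [this ▸ (add_lt_add e1 e2)]

lemma strictConvex_Lfun : StrictConvexOn ℝ (Set.Ioo (0:ℝ) 1) Lfun := by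
  apply strictConvexOn_of_deriv2_pos (convex_Ioo 0 1)
  · exact fun x hx => (hasDerivAt_Lfun hx).differentiableAt.continuousAt.continuousWithinAt
  · intro x hx
    rw [interior_Ioo] at hx
    have heq : deriv Lfun =ᶠ[nhds x] Lder := by
      filter_upwards [(isOpen_Ioo).mem_nhds hx] with y hy
      exact (hasDerivAt_Lfun hy).deriv
    have : (deriv^[2] Lfun) x = deriv (deriv Lfun) x := by
      simp [Function.iterate_succ, Function.comp]
    rw [this, heq.deriv_eq, (hasDerivAt_Lder hx).deriv]
    exact Lder2_pos hx

lemma half_mem : (1/2 : ℝ) ∈ Set.Ioo (0:ℝ) 1 := by norm_num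

lemma deriv_Lfun_half : deriv Lfun (1/2) = 0 := by
  rw [(hasDerivAt_Lfun half_mem).deriv]
  have hc : Real.cos (π * (1/2)) = 0 := by
    rw [show π * (1/2 : ℝ) = π / 2 by ring]; exact Real.cos_pi_div_two
  simp [Lder, hc]
  exact Or.inl (by rw [show π * (2⁻¹:ℝ) = π/2 by ring]; exact Real.cos_pi_div_two)

lemma Lfun_min {q : ℝ} (hq : q ∈ Set.Ioo (0:ℝ) 1) (hne : q ≠ 1/2) :
    Lfun (1/2) < Lfun q := by
  have hd : DifferentiableAt ℝ Lfun (1/2) := (hasDerivAt_Lfun half_mem).differentiableAt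
  rcases lt_or_gt_of_ne hne with h | h
  · have := strictConvex_Lfun.slope_lt_deriv hq half_mem h hd
    rw [deriv_Lfun_half, slope_def_field] at this
    have h2 : (1/2 : ℝ) - q > 0 := by linarith
    rcases div_neg_iff.mp this with ⟨-, hb⟩ | ⟨ha, -⟩ <;> linarith
  · have := strictConvex_Lfun.deriv_lt_slope half_mem hq h hd
    rw [deriv_Lfun_half, slope_def_field] at this
    have h2 : q - (1/2 : ℝ) > 0 := by linarith
    rcases div_pos_iff.mp this with ⟨ha, -⟩ | ⟨-, hb⟩ <;> linarith

/-- `L q = log (q - q²) - 2 log (sin (π q))` satisfies `L'(1/2) = 0` and is convex on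
`(0,1)`; hence `q = 1/2` is the unique global minimizer of
`g q = π² (q - q²) / sin² (π q)` on `(0,1)`. -/
theorem cauchy_variance_minimizer :
    let L : ℝ → ℝ := fun q => Real.log (q - q ^ 2) - 2 * Real.log (Real.sin (π * q))
    let g : ℝ → ℝ := fun q => π ^ 2 * (q - q ^ 2) / (Real.sin (π * q)) ^ 2
    deriv L (1 / 2) = 0 ∧ ConvexOn ℝ (Set.Ioo (0 : ℝ) 1) L ∧
      ∀ q ∈ Set.Ioo (0 : ℝ) 1, q ≠ 1 / 2 → g (1 / 2) < g q := by
  intro L g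
  have hL : L = Lfun := rfl
  refine ⟨by rw [hL]; exact deriv_Lfun_half, by rw [hL]; exact strictConvex_Lfun.convexOn, ?_⟩
  intro q hq hne
  have hmin := Lfun_min hq hne
  obtain ⟨hqq, hs, -, -⟩ := aux_facts hq
  have hs2 : 0 < Real.sin (π * q) ^ 2 := by positivity
  -- rewrite Lfun as a single log
  have hexp : ∀ x ∈ Set.Ioo (0:ℝ) 1, Lfun x = Real.log ((x - x ^ 2) / Real.sin (π * x) ^ 2) := by
    intro x hx
    obtain ⟨hxq, hxs, -, -⟩ := aux_facts hx
    rw [Lfun, Real.log_div hxq.ne' (by positivity), Real.log_pow]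
    push_cast
    ring
  rw [hexp _ half_mem, hexp _ hq] at hmin
  have hratio : (1/2 - (1/2:ℝ) ^ 2) / Real.sin (π * (1/2)) ^ 2
      < (q - q ^ 2) / Real.sin (π * q) ^ 2 := by
    have hpos : 0 < (1/2 - (1/2:ℝ) ^ 2) / Real.sin (π * (1/2)) ^ 2 := by
      obtain ⟨ha, hb, -, -⟩ := aux_facts half_mem
      positivity
    exact (Real.log_lt_log_iff hpos (by positivity)).mp hmin
  show π ^ 2 * (1/2 - (1/2:ℝ) ^ 2) / Real.sin (π * (1/2)) ^ 2
      < π ^ 2 * (q - q ^ 2) / Real.sin (π * q) ^ 2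
  have hπ : (0:ℝ) < π ^ 2 := by positivity
  calc π ^ 2 * (1/2 - (1/2:ℝ) ^ 2) / Real.sin (π * (1/2)) ^ 2
      = π ^ 2 * ((1/2 - (1/2:ℝ) ^ 2) / Real.sin (π * (1/2)) ^ 2) := by ring
    _ < π ^ 2 * ((q - q ^ 2) / Real.sin (π * q) ^ 2) := by
        exact (mul_lt_mul_iff_right₀ hπ).mpr hratio
    _ = π ^ 2 * (q - q ^ 2) / Real.sin (π * q) ^ 2 := by ring
end

section
/- The function h(q) = (1-q)/(q · log²(q)) is convex on (0,1), and its unique minimizer q* ∈ (0,1) satisfies -log(q*) + 2q* - 2 = 0. -/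
open Real Set

noncomputable def auxH : ℝ → ℝ := fun q => (1 - q) / (q * (Real.log q) ^ 2)
noncomputable def auxH1 : ℝ → ℝ := fun q => (2*q - 2 - Real.log q) / (q^2 * (Real.log q)^3)
noncomputable def auxH2 : ℝ → ℝ := fun q =>
  (2*((Real.log q)^2 + 3*Real.log q + 3 - q*(Real.log q + 3))) / (q^3 * (Real.log q)^4)
noncomputable def auxPhi : ℝ → ℝ := fun q => Real.log q + 2 - 2*q

lemma auxH_hasDeriv {q : ℝ} (hq : q ∈ Ioo (0:ℝ) 1) : HasDerivAt auxH (auxH1 q) q := by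
  obtain ⟨hq0, hq1⟩ := hq
  have hL : Real.log q < 0 := Real.log_neg hq0 hq1
  have hLne : Real.log q ≠ 0 := ne_of_lt hL
  have du : HasDerivAt (fun x : ℝ => 1 - x) (-1) q := by
    simpa using (hasDerivAt_id q).const_sub 1
  have dlog : HasDerivAt Real.log (1/q) q := by
    simpa [one_div] using Real.hasDerivAt_log hq0.ne'
  have dL2 : HasDerivAt (fun x => (Real.log x)^2) (2 * (Real.log q)^1 * (1/q)) q := dlog.pow 2
  have dv : HasDerivAt (fun x => x * (Real.log x)^2)
      (1 * (Real.log q)^2 + q * (2 * (Real.log q)^1 * (1/q))) q := (hasDerivAt_id q).mul dL2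
  have hvne : q * (Real.log q)^2 ≠ 0 := by positivity
  have := du.div dv hvne
  refine this.congr_deriv ?_
  unfold auxH1
  field_simp
  ring

lemma auxH1_hasDeriv {q : ℝ} (hq : q ∈ Ioo (0:ℝ) 1) : HasDerivAt auxH1 (auxH2 q) q := by
  obtain ⟨hq0, hq1⟩ := hq
  have hL : Real.log q < 0 := Real.log_neg hq0 hq1
  have hLne : Real.log q ≠ 0 := ne_of_lt hL
  have dlog : HasDerivAt Real.log (1/q) q := by
    simpa [one_div] using Real.hasDerivAt_log hq0.ne'
  have du : HasDerivAt (fun x : ℝ => 2*x - 2 - Real.log x) (2 - 1/q) q := by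
    have h2x : HasDerivAt (fun x : ℝ => 2*x - 2) 2 q := by
      simpa using ((hasDerivAt_id q).const_mul 2).sub_const 2
    exact h2x.sub dlog
  have dq2 : HasDerivAt (fun x : ℝ => x^2) (2 * q^1) q := by
    simpa using hasDerivAt_pow 2 q
  have dL3 : HasDerivAt (fun x => (Real.log x)^3) (3 * (Real.log q)^2 * (1/q)) q := dlog.pow 3
  have dv : HasDerivAt (fun x => x^2 * (Real.log x)^3)
      (2 * q^1 * (Real.log q)^3 + q^2 * (3 * (Real.log q)^2 * (1/q))) q := dq2.mul dL3
  have hvne : q^2 * (Real.log q)^3 ≠ 0 := by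
    apply mul_ne_zero (by positivity) (pow_ne_zero _ hLne)
  have := du.div dv hvne
  refine this.congr_deriv ?_
  unfold auxH2
  field_simp
  ring

lemma auxH2_nonneg {q : ℝ} (hq : q ∈ Ioo (0:ℝ) 1) : 0 ≤ auxH2 q := by
  obtain ⟨hq0, hq1⟩ := hq
  have hL : Real.log q < 0 := Real.log_neg hq0 hq1
  have hLne : Real.log q ≠ 0 := ne_of_lt hL
  set L := Real.log q with hLdef
  have hkey : q * (1 - L) ≤ 1 := by
    have h1L : 1 - L ≤ Real.exp (-L) := by
      have := Real.add_one_le_exp (-L); linarith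
    have : q * (1 - L) ≤ q * Real.exp (-L) :=
      mul_le_mul_of_nonneg_left h1L hq0.le
    have hqe : q * Real.exp (-L) = 1 := by
      rw [hLdef]
      rw [← Real.exp_log hq0]
      rw [← Real.exp_add]
      simp
    linarith [this, hqe.le]
  have hP : 0 ≤ L^2 + 3*L + 3 - q*(L + 3) := by
    rcases le_or_gt (L + 3) 0 with h3 | h3
    · nlinarith [sq_nonneg (2*L + 3), mul_nonneg hq0.le (neg_nonneg.2 h3)]
    · nlinarith [mul_nonneg (mul_nonneg hq0.le h3.le) (by linarith : (0:ℝ) ≤ 1 - L),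
        mul_nonneg (neg_nonneg.2 hL.le) (sq_nonneg (L+1)),
        mul_le_mul_of_nonneg_left hkey h3.le]
  have hden : (0:ℝ) < q^3 * L^4 := by
    have hL4 : (0:ℝ) < L^4 := by positivity
    positivity
  unfold auxH2
  exact div_nonneg (by linarith) hden.le

lemma auxPhi_hasDeriv {q : ℝ} (hq : 0 < q) : HasDerivAt auxPhi (1/q - 2) q := by
  have dlog : HasDerivAt Real.log (1/q) q := by
    simpa [one_div] using Real.hasDerivAt_log hq.ne'
  unfold auxPhi
  exact ((dlog.add_const 2).sub (((hasDerivAt_id q).const_mul 2))).congr_deriv (by ring)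

lemma auxPhi_strictMono : StrictMonoOn auxPhi (Ioc (0:ℝ) (1/2)) := by
  apply strictMonoOn_of_deriv_pos (convex_Ioc _ _)
  · exact fun x hx => (auxPhi_hasDeriv hx.1).continuousAt.continuousWithinAt
  · intro x hx
    rw [interior_Ioc] at hx
    rw [(auxPhi_hasDeriv hx.1).deriv]
    have : 2 < 1/x := by
      rw [lt_div_iff₀ hx.1]; linarith [hx.2]
    linarith

lemma auxPhi_strictAnti : StrictAntiOn auxPhi (Icc (1/2:ℝ) 1) := by
  apply strictAntiOn_of_deriv_neg (convex_Icc _ _)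
  · exact fun x hx => (auxPhi_hasDeriv (by linarith [hx.1] : (0:ℝ) < x)).continuousAt.continuousWithinAt
  · intro x hx
    rw [interior_Icc] at hx
    have hx0 : (0:ℝ) < x := by linarith [hx.1]
    rw [(auxPhi_hasDeriv hx0).deriv]
    have : 1/x < 2 := by
      rw [div_lt_iff₀ hx0]; linarith [hx.1]
    linarith

lemma main_aux :
    ConvexOn ℝ (Set.Ioo (0 : ℝ) 1) auxH ∧
      ∃ q ∈ Set.Ioo (0 : ℝ) 1,
        (∀ x ∈ Set.Ioo (0 : ℝ) 1, auxH q ≤ auxH x) ∧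
        (∀ q' ∈ Set.Ioo (0 : ℝ) 1, (∀ x ∈ Set.Ioo (0 : ℝ) 1, auxH q' ≤ auxH x) → q' = q) ∧
        -Real.log q + 2 * q - 2 = 0 := by
  -- eventual equality of deriv auxH with auxH1 on the open set
  have hderiv_eq : ∀ x ∈ Ioo (0:ℝ) 1, deriv auxH x = auxH1 x :=
    fun x hx => (auxH_hasDeriv hx).deriv
  have hEv : ∀ x ∈ Ioo (0:ℝ) 1, deriv auxH =ᶠ[nhds x] auxH1 := by
    intro x hx
    filter_upwards [isOpen_Ioo.mem_nhds hx] with y hy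
    exact hderiv_eq y hy
  have hconv : ConvexOn ℝ (Set.Ioo (0:ℝ) 1) auxH := by
    apply convexOn_of_deriv2_nonneg (convex_Ioo 0 1)
    · exact fun x hx => (auxH_hasDeriv hx).continuousAt.continuousWithinAt
    · rw [interior_Ioo]
      exact fun x hx => (auxH_hasDeriv hx).differentiableAt.differentiableWithinAt
    · rw [interior_Ioo]
      exact fun x hx =>
        ((auxH1_hasDeriv hx).differentiableAt.congr_of_eventuallyEq (hEv x hx)).differentiableWithinAt
    · rw [interior_Ioo]
      intro x hx
      have : deriv (deriv auxH) x = auxH2 x := by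
        rw [(hEv x hx).deriv_eq, (auxH1_hasDeriv hx).deriv]
      simp only [Function.iterate_succ_apply', Function.iterate_zero_apply]
      rw [this]
      exact auxH2_nonneg hx
  -- existence of root of phi
  have he2 : Real.exp (-2) < 1/2 := by
    have h3 : (3:ℝ) ≤ Real.exp 2 := by
      have := Real.add_one_le_exp (2:ℝ); linarith
    rw [Real.exp_neg]
    rw [inv_lt_comm₀ (by linarith) (by norm_num)]
    norm_num; linarith
  have hroot : ∃ q ∈ Ioo (Real.exp (-2)) (1/2:ℝ), auxPhi q = 0 := by
    have hcont : ContinuousOn auxPhi (Icc (Real.exp (-2)) (1/2)) := by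
      intro x hx
      have hx0 : 0 < x := lt_of_lt_of_le (Real.exp_pos _) hx.1
      exact (auxPhi_hasDeriv hx0).continuousAt.continuousWithinAt
    have hsub := intermediate_value_Ioo he2.le hcont
    have h0mem : (0:ℝ) ∈ Ioo (auxPhi (Real.exp (-2))) (auxPhi (1/2)) := by
      constructor
      · show auxPhi (Real.exp (-2)) < 0
        unfold auxPhi
        rw [Real.log_exp]
        have := Real.exp_pos (-2:ℝ)
        linarith
      · show (0:ℝ) < auxPhi (1/2)
        unfold auxPhi
        have : Real.log (1/2 : ℝ) = -Real.log 2 := by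
          rw [one_div, Real.log_inv]
        rw [this]
        have := Real.log_two_lt_d9
        norm_num
        linarith
    obtain ⟨q, hqm, hq⟩ := hsub h0mem
    exact ⟨q, hqm, hq⟩
  obtain ⟨q0, hq0m, hq0root⟩ := hroot
  have hq0pos : 0 < q0 := lt_trans (Real.exp_pos _) hq0m.1
  have hq0half : q0 < 1/2 := hq0m.2
  have hq0lt1 : q0 < 1 := by linarith
  have hq0mem : q0 ∈ Ioo (0:ℝ) 1 := ⟨hq0pos, hq0lt1⟩
  -- sign of phi
  have hphi_neg : ∀ x, 0 < x → x < q0 → auxPhi x < 0 := by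
    intro x hx0 hxq
    have := auxPhi_strictMono ⟨hx0, by linarith⟩ ⟨hq0pos, hq0half.le⟩ hxq
    linarith [hq0root]
  have hphi_pos : ∀ x, q0 < x → x < 1 → 0 < auxPhi x := by
    intro x hxq hx1
    rcases le_or_gt x (1/2) with hx2 | hx2
    · have := auxPhi_strictMono ⟨hq0pos, hq0half.le⟩ ⟨by linarith, hx2⟩ hxq
      linarith [hq0root]
    · have h1 : auxPhi 1 = 0 := by unfold auxPhi; simp
      have := auxPhi_strictAnti ⟨hx2.le, hx1.le⟩ ⟨by norm_num, le_refl 1⟩ hx1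
      linarith
  -- sign of auxH1
  have hH1_neg : ∀ x, 0 < x → x < q0 → auxH1 x < 0 := by
    intro x hx0 hxq
    have hx1 : x < 1 := by linarith
    have hL : Real.log x < 0 := Real.log_neg hx0 hx1
    have hden : x^2 * (Real.log x)^3 < 0 := by
      apply mul_neg_of_pos_of_neg (by positivity)
      exact Odd.pow_neg ⟨1, rfl⟩ hL
    have hnum : 0 < 2*x - 2 - Real.log x := by
      have := hphi_neg x hx0 hxq
      unfold auxPhi at this
      linarith
    exact div_neg_of_pos_of_neg hnum hden
  have hH1_pos : ∀ x, q0 < x → x < 1 → 0 < auxH1 x := by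
    intro x hxq hx1
    have hx0 : 0 < x := lt_trans hq0pos hxq
    have hL : Real.log x < 0 := Real.log_neg hx0 hx1
    have hden : x^2 * (Real.log x)^3 < 0 := by
      apply mul_neg_of_pos_of_neg (by positivity)
      exact Odd.pow_neg ⟨1, rfl⟩ hL
    have hnum : 2*x - 2 - Real.log x < 0 := by
      have := hphi_pos x hxq hx1
      unfold auxPhi at this
      linarith
    exact div_pos_of_neg_of_neg hnum hden
  -- monotonicity of auxH
  have hanti : StrictAntiOn auxH (Ioc (0:ℝ) q0) := by
    apply strictAntiOn_of_deriv_neg (convex_Ioc _ _)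
    · intro x hx
      exact (auxH_hasDeriv ⟨hx.1, by linarith [hx.2]⟩).continuousAt.continuousWithinAt
    · intro x hx
      rw [interior_Ioc] at hx
      rw [hderiv_eq x ⟨hx.1, by linarith [hx.2]⟩]
      exact hH1_neg x hx.1 hx.2
  have hmono : StrictMonoOn auxH (Ico q0 (1:ℝ)) := by
    apply strictMonoOn_of_deriv_pos (convex_Ico _ _)
    · intro x hx
      exact (auxH_hasDeriv ⟨by linarith [hx.1], hx.2⟩).continuousAt.continuousWithinAt
    · intro x hx
      rw [interior_Ico] at hx
      rw [hderiv_eq x ⟨by linarith [hx.1], hx.2⟩]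
      exact hH1_pos x hx.1 hx.2
  have hmin : ∀ x ∈ Ioo (0:ℝ) 1, auxH q0 ≤ auxH x := by
    intro x hx
    rcases lt_trichotomy x q0 with h | h | h
    · exact (hanti ⟨hx.1, h.le⟩ ⟨hq0pos, le_refl _⟩ h).le
    · rw [h]
    · exact (hmono ⟨le_refl _, hq0lt1⟩ ⟨h.le, hx.2⟩ h).le
  refine ⟨hconv, q0, hq0mem, hmin, ?_, ?_⟩
  · intro q' hq' hq'min
    by_contra hne
    rcases lt_or_gt_of_ne hne with h | h
    · have h1 := hanti ⟨hq'.1, h.le⟩ ⟨hq0pos, le_refl _⟩ h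
      have h2 := hq'min q0 hq0mem
      linarith
    · have h1 := hmono ⟨le_refl _, hq0lt1⟩ ⟨h.le, hq'.2⟩ h
      have h2 := hq'min q0 hq0mem
      linarith
  · unfold auxPhi at hq0root
    linarith

/-- `h q = (1-q)/(q log² q)` is convex on `(0,1)`, and its unique minimizer `q*` on
`(0,1)` satisfies `-log q* + 2 q* - 2 = 0`. -/
theorem alpha_zero_variance_factor_convex :
    let h : ℝ → ℝ := fun q => (1 - q) / (q * (Real.log q) ^ 2)
    ConvexOn ℝ (Set.Ioo (0 : ℝ) 1) h ∧
      ∃ q ∈ Set.Ioo (0 : ℝ) 1,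
        (∀ x ∈ Set.Ioo (0 : ℝ) 1, h q ≤ h x) ∧
        (∀ q' ∈ Set.Ioo (0 : ℝ) 1, (∀ x ∈ Set.Ioo (0 : ℝ) 1, h q' ≤ h x) → q' = q) ∧
        -Real.log q + 2 * q - 2 = 0 := by
  intro h
  exact main_aux
end

section
/- Fix q ∈ (0,1), α ∈ (0,2], and let F be the CDF of |S(α,1)| with density f, W = F^{-1}(q), and assume f(W) > 0 and F differentiable at W. Define for ε ∈ (0,1): G_R(ε) = ε² / [ -(1-q)log((1-F((1+ε)^{1/α}W))/(1-q)) ... ], i.e., 1/G_R(ε) = [ -(1-q)log(1-F((1+ε)^{1/α}W)) - q log F((1+ε)^{1/α}W) + (1-q)log(1-q) + q log q ] / ε². Then lim_{ε→0+} G_R(ε) = 2q(1-q)α² / (f(W)² W²). -/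
open Real Filter Set

/-- Limit of the right tail-bound constant `G_{R,q}` as `ε → 0+`: with `F` a twice
differentiable strictly increasing CDF with density `f = F'`, `W > 0`, `F W = q ∈ (0,1)`,
and `f W > 0`,
`lim_{ε→0+} ε² / D(ε) = 2 q (1-q) α² / (f(W)² W²)` where
`D(ε) = -(1-q) log (1 - F((1+ε)^{1/α} W)) - q log F((1+ε)^{1/α} W)
        + (1-q) log (1-q) + q log q`. -/
theorem tail_constant_limit (α q W : ℝ) (hα0 : 0 < α) (hα2 : α ≤ 2)
    (hq : q ∈ Set.Ioo (0 : ℝ) 1) (hW : 0 < W)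
    (F f : ℝ → ℝ) (hFsmooth : ContDiff ℝ 2 F) (hFm : StrictMono F)
    (hf : ∀ x, HasDerivAt F (f x) x) (hFW : F W = q) (hfW : 0 < f W) :
    Tendsto
      (fun ε : ℝ => ε ^ 2 /
        (-(1 - q) * Real.log (1 - F ((1 + ε) ^ (1 / α) * W))
          - q * Real.log (F ((1 + ε) ^ (1 / α) * W))
          + (1 - q) * Real.log (1 - q) + q * Real.log q))
      (nhdsWithin 0 (Set.Ioi 0))
      (nhds (2 * q * (1 - q) * α ^ 2 / ((f W) ^ 2 * W ^ 2))) := by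
  obtain ⟨hq0, hq1⟩ := hq
  have hq1' : (0:ℝ) < 1 - q := by linarith
  have hαne : α ≠ 0 := hα0.ne'
  -- the functions
  have u_def : True := trivial
  let u : ℝ → ℝ := fun x => (1 + x) ^ (1/α) * W
  let u' : ℝ → ℝ := fun x => (1/α * (1 + x) ^ (1/α - 1) * 1) * W
  let g : ℝ → ℝ := fun x => F (u x)
  let g' : ℝ → ℝ := fun x => f (u x) * u' x
  let k : ℝ → ℝ := fun x => (1 - q)/(1 - g x) - q / g x
  let D : ℝ → ℝ := fun ε => -(1 - q) * Real.log (1 - g ε)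
          - q * Real.log (g ε) + (1 - q) * Real.log (1 - q) + q * Real.log q
  let D' : ℝ → ℝ := fun x => g' x * k x
  -- derivatives of u and g
  have hu' : ∀ x : ℝ, -1 < x → HasDerivAt u (u' x) x := by
    intro x hx
    have h1 : HasDerivAt (fun y : ℝ => 1 + y) 1 x := by
      simpa using (hasDerivAt_id x).const_add 1
    have h2 : HasDerivAt (fun y : ℝ => y ^ (1/α)) (1/α * (1+x)^(1/α - 1)) (1+x) :=
      Real.hasDerivAt_rpow_const (Or.inl (by linarith))
    exact ((h2.comp x h1).mul_const W)
  have hg' : ∀ x : ℝ, -1 < x → HasDerivAt g (g' x) x := fun x hx =>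
    (hf (u x)).comp x (hu' x hx)
  have hu0 : u 0 = W := by simp [u]
  have hg0 : g 0 = q := by simp [g, hu0, hFW]
  have hu'0 : u' 0 = 1/α * W := by simp [u']
  have hg'0 : g' 0 = f W * (1/α * W) := by simp [g', hu0, hu'0]
  -- continuity of g at 0
  have hgc : ContinuousAt g 0 := (hg' 0 (by norm_num)).continuousAt
  -- choose b such that g < 1 on Ioo 0 b
  have hlt1 : ∀ᶠ x in nhds (0:ℝ), g x < 1 := hgc.eventually_lt continuousAt_const (by rw [hg0]; exact hq1)
  obtain ⟨b, hb, hball⟩ := Metric.eventually_nhds_iff.mp hlt1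
  -- facts on Ioo 0 b
  have hmem : ∀ x ∈ Ioo (0:ℝ) b, q < g x ∧ g x < 1 := by
    intro x hx
    constructor
    · rw [← hFW]
      apply hFm
      have h1 : (1:ℝ) < (1 + x) ^ (1/α) := by
        rw [Real.one_lt_rpow_iff_of_pos (by linarith [hx.1] : (0:ℝ) < 1 + x)]
        exact Or.inl ⟨by linarith [hx.1], by positivity⟩
      calc W = 1 * W := (one_mul W).symm
        _ < (1 + x) ^ (1/α) * W := by
            exact mul_lt_mul_of_pos_right h1 hW
    · apply hball
      simp only [Real.dist_eq, sub_zero]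
      rw [abs_of_pos hx.1]
      exact hx.2
  -- derivative of D on Ioo 0 b
  have hD' : ∀ x ∈ Ioo (0:ℝ) b, HasDerivAt D (D' x) x := by
    intro x hx
    obtain ⟨hgq, hg1⟩ := hmem x hx
    have hgne : g x ≠ 0 := ne_of_gt (lt_trans hq0 hgq)
    have hgne1 : 1 - g x ≠ 0 := by
      intro h; exact absurd (by linarith : g x = 1) (ne_of_lt hg1)
    have hgx : HasDerivAt g (g' x) x := hg' x (by linarith [hx.1])
    have h1 : HasDerivAt (fun y => Real.log (1 - g y)) ((1 - g x)⁻¹ * (-g' x)) x :=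
      by have := (Real.hasDerivAt_log hgne1).comp x (hgx.const_sub 1); exact this
    have h2 : HasDerivAt (fun y => Real.log (g y)) ((g x)⁻¹ * g' x) x :=
      (Real.hasDerivAt_log hgne).comp x hgx
    have : HasDerivAt D (-(1 - q) * ((1 - g x)⁻¹ * -g' x) - q * ((g x)⁻¹ * g' x)) x := (((h1.const_mul (-(1-q))).sub (h2.const_mul q)).add_const
        ((1 - q) * Real.log (1 - q))).add_const (q * Real.log q)
    convert this using 1
    simp only [D', k]
    field_simp
  -- D tends to 0
  have hD0 : Tendsto D (nhdsWithin 0 (Ioi 0)) (nhds 0) := by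
    have hc : ContinuousAt D 0 := by
      have h1 : ContinuousAt (fun y => Real.log (1 - g y)) 0 :=
        (continuousAt_const.sub hgc).log (by show (1:ℝ) - g 0 ≠ 0; rw [hg0]; exact ne_of_gt hq1')
      have h2 : ContinuousAt (fun y => Real.log (g y)) 0 :=
        hgc.log (by rw [hg0]; exact ne_of_gt hq0)
      exact ((((h1.const_mul (-(1-q))).sub (h2.const_mul q)).add continuousAt_const).add
        continuousAt_const : ContinuousAt (fun y => -(1-q) * Real.log (1 - g y) - q * Real.log (g y) + (1-q)*Real.log (1-q) + q * Real.log q) 0)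
    have hD00 : D 0 = 0 := by simp [D, hg0]; ring
    have h := hc.tendsto
    rw [hD00] at h
    exact h.mono_left nhdsWithin_le_nhds
  -- square function
  have hsq : ∀ x ∈ Ioo (0:ℝ) b, HasDerivAt (fun y : ℝ => y^2) (2*x) x := by
    intro x hx
    simpa using hasDerivAt_pow 2 x
  have hsq0 : Tendsto (fun x : ℝ => x^2) (nhdsWithin 0 (Ioi 0)) (nhds 0) := by
    have h : ContinuousAt (fun x : ℝ => x^2) 0 := by fun_prop
    have h2 := h.tendsto
    norm_num at h2
    exact h2.mono_left nhdsWithin_le_nhds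
  have hsqne : ∀ x ∈ Ioo (0:ℝ) b, (2*x : ℝ) ≠ 0 := by
    intro x hx; have := hx.1; positivity
  -- limit of D'/(2x)
  -- k has derivative at 0
  have hψ : HasDerivAt (fun p : ℝ => (1-q)/(1-p) - q/p)
      ((0 * (1-q) - (1-q) * (-1))/(1-q)^2 - (0 * q - q * 1)/q^2) (g 0) := by
    rw [hg0]
    have h1 : HasDerivAt (fun p : ℝ => (1-q)/(1-p)) ((0 * (1-q) - (1-q) * (-1))/(1-q)^2) q := by
      exact (hasDerivAt_const q (1-q)).div ((hasDerivAt_id q).const_sub 1) (ne_of_gt hq1')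
    have h2 : HasDerivAt (fun p : ℝ => q/p) ((0 * q - q * 1)/q^2) q := by
      exact (hasDerivAt_const q q).div (hasDerivAt_id q) (ne_of_gt hq0)
    exact h1.sub h2
  have hk : HasDerivAt k (((0 * (1-q) - (1-q) * (-1))/(1-q)^2 - (0 * q - q * 1)/q^2) * g' 0) 0 :=
    hψ.comp 0 (hg' 0 (by norm_num))
  have hk0 : k 0 = 0 := by
    simp only [k, hg0]
    field_simp
    ring
  set κ : ℝ := ((0 * (1-q) - (1-q) * (-1))/(1-q)^2 - (0 * q - q * 1)/q^2) * g' 0 with hκ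
  have hslope : Tendsto (fun x => k x / x) (nhdsWithin 0 (Ioi 0)) (nhds κ) := by
    have h1 := hasDerivAt_iff_tendsto_slope.mp hk
    have h2 : Tendsto (slope k 0) (nhdsWithin 0 (Ioi 0)) (nhds κ) :=
      h1.mono_left (nhdsWithin_mono 0 (fun x hx => ne_of_gt hx))
    refine h2.congr fun x => ?_
    simp [slope_def_field, hk0]
  -- g'/2 limit
  have hfc : Continuous f := by
    have : deriv F = f := funext fun x => (hf x).deriv
    rw [← this]
    exact hFsmooth.continuous_deriv (by norm_num)
  have hg'c : ContinuousAt g' 0 := by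
    have huc : ContinuousAt u 0 := (hu' 0 (by norm_num)).continuousAt
    have hu'c : ContinuousAt u' 0 := by
      have : ContinuousAt (fun x : ℝ => (1 + x) ^ (1/α - 1)) 0 :=
        (continuousAt_const.add continuousAt_id).rpow_const (Or.inl (by norm_num))
      fun_prop
    exact ((hfc.continuousAt).comp huc).mul hu'c
  have hg'lim : Tendsto (fun x => g' x / 2) (nhdsWithin 0 (Ioi 0)) (nhds (g' 0 / 2)) :=
    ((hg'c.tendsto).div_const 2).mono_left nhdsWithin_le_nhds
  -- combine
  set c : ℝ := κ * (g' 0 / 2) with hc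
  have hdiv : Tendsto (fun x => D' x / (2*x)) (nhdsWithin 0 (Ioi 0)) (nhds c) := by
    have := hslope.mul hg'lim
    refine this.congr fun x => ?_
    simp only [D']
    ring
  -- L'Hopital
  have hquot : Tendsto (fun x => D x / x^2) (nhdsWithin 0 (Ioi 0)) (nhds c) :=
    HasDerivAt.lhopital_zero_right_on_Ioo hb hD' hsq hsqne hD0 hsq0 hdiv
  -- c value
  have hcval : c = (f W)^2 * W^2 / (2*q*(1-q)*α^2) := by
    rw [hc, hκ, hg'0]
    field_simp
    ring
  have hcne : c ≠ 0 := by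
    rw [hcval]
    positivity
  have hfinal := hquot.inv₀ hcne
  have hcinv : c⁻¹ = 2 * q * (1 - q) * α ^ 2 / ((f W) ^ 2 * W ^ 2) := by
    rw [hcval, inv_div]
  rw [hcinv] at hfinal
  refine hfinal.congr fun x => ?_
  rw [inv_div]
end

section
/- Let F be a continuous strictly increasing CDF with positive density f at W = F^{-1}((q+1)/2). For the estimator d̂ = (empirical q-quantile of {|x_j|}/W)^α based on k i.i.d. samples x_j with law symmetric and scale 1 (true value d = 1), and for ε ∈ (0,1): P(d̂ ≤ 1 - ε) ≤ exp(-k·D(q ‖ 2F((1-ε)^{1/α}W) - 1)), where D is binary KL divergence, provided 2F((1-ε)^{1/α}W) - 1 < q. -/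
open Real MeasureTheory ProbabilityTheory

/-- For a random variable with continuous CDF `F`, the measure of the open
left tail `{x < t}` also equals `F t`. -/
lemma meas_lt_of_cdf {Ω : Type*} [MeasurableSpace Ω] (μ : Measure Ω)
    (x : Ω → ℝ) (F : ℝ → ℝ) (hFc : Continuous F)
    (hcdf : ∀ t : ℝ, μ {ω | x ω ≤ t} = ENNReal.ofReal (F t)) (t : ℝ) :
    μ {ω | x ω < t} = ENNReal.ofReal (F t) := by
  have hset : {ω | x ω < t} = ⋃ n : ℕ, {ω | x ω ≤ t - 1 / (n + 1)} := by
    ext ω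
    simp only [Set.mem_setOf_eq, Set.mem_iUnion]
    constructor
    · intro h
      obtain ⟨n, hn⟩ := exists_nat_one_div_lt (sub_pos.mpr h)
      exact ⟨n, by linarith⟩
    · rintro ⟨n, hn⟩
      have : (0:ℝ) < 1 / (n + 1) := by positivity
      linarith
  have hmono : Monotone fun n : ℕ => {ω | x ω ≤ t - 1 / (n + 1)} := by
    intro m n hmn ω hω
    simp only [Set.mem_setOf_eq] at *
    have h1 : (1:ℝ) / (n + 1) ≤ 1 / (m + 1) := by
      apply one_div_le_one_div_of_le (by positivity)
      exact_mod_cast by exact_mod_cast add_le_add_left (Nat.cast_le.mpr hmn) 1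
    linarith
  have h1 := tendsto_measure_iUnion_atTop (μ := μ) hmono
  have h2 : Filter.Tendsto (fun n : ℕ => μ {ω | x ω ≤ t - 1 / (n + 1)})
      Filter.atTop (nhds (ENNReal.ofReal (F t))) := by
    simp only [hcdf]
    apply (ENNReal.continuous_ofReal.tendsto _).comp
    apply (hFc.tendsto _).comp
    have : Filter.Tendsto (fun n : ℕ => (1:ℝ) / (n + 1)) Filter.atTop (nhds 0) :=
      tendsto_one_div_add_atTop_nhds_zero_nat
    have := this.const_sub t
    simpa using this
  rw [hset]
  exact tendsto_nhds_unique h1 h2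

set_option maxHeartbeats 1600000 in
/-- Left tail bound for the quantile estimator at true scale `d = 1`: with `F` a
continuous strictly increasing CDF with positive density at `W = F⁻¹((q+1)/2)`, for
`ε ∈ (0,1)` and `p = 2 F((1-ε)^{1/α} W) - 1 < q`,
`P(d̂ ≤ 1-ε) ≤ exp (-k D(q‖p))` where `d̂ = (empirical q-quantile of |x_j| / W)^α`. -/
theorem quantile_estimator_left_tail
    {Ω : Type*} [MeasurableSpace Ω] (μ : Measure Ω) [IsProbabilityMeasure μ]
    (k : ℕ) (hk : 0 < k) (x : Fin k → Ω → ℝ) (hXm : ∀ j, Measurable (x j))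
    (hindep : iIndepFun x μ)
    (F : ℝ → ℝ) (hFc : Continuous F) (hFm : StrictMono F)
    (hsym : ∀ t : ℝ, F (-t) = 1 - F t)
    (hcdf : ∀ j, ∀ t : ℝ, μ {ω | x j ω ≤ t} = ENNReal.ofReal (F t))
    (α q W ε fW : ℝ) (hα : 0 < α) (hq : q ∈ Set.Ioo (0 : ℝ) 1) (hW : 0 < W)
    (hFW : F W = (q + 1) / 2)
    (hderiv : HasDerivAt F fW W) (hfW : 0 < fW)
    (hε : ε ∈ Set.Ioo (0 : ℝ) 1)
    (p : ℝ) (hp : p = 2 * F ((1 - ε) ^ (1 / α) * W) - 1) (hpq : p < q) :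
    μ {ω | (sInf {s : ℝ |
          q * k ≤ ((Finset.univ.filter fun j => |x j ω| ≤ s).card : ℝ)} / W) ^ α
        ≤ 1 - ε}
      ≤ ENNReal.ofReal
        (Real.exp (-(k * (q * Real.log (q / p)
          + (1 - q) * Real.log ((1 - q) / (1 - p)))))) := by
  obtain ⟨hq0, hq1⟩ := hq
  obtain ⟨hε0, hε1⟩ := hε
  set c : ℝ := (1 - ε) ^ (1 / α) * W with hc_def
  have h1ε : (0:ℝ) < 1 - ε := by linarith
  have hcpos : 0 < c := mul_pos (Real.rpow_pos_of_pos h1ε _) hW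
  -- basic facts about F and p
  have hF0 : F 0 = 1 / 2 := by have := hsym 0; rw [neg_zero] at this; linarith
  have hp0 : 0 < p := by
    have : F 0 < F c := hFm hcpos
    rw [hp]; rw [hF0] at this; linarith
  have hp1 : p < 1 := lt_trans hpq hq1
  -- the count as a sum of indicators
  set g : ℝ → ℝ := fun u => if |u| ≤ c then 1 else 0 with hg_def
  set Y : Fin k → Ω → ℝ := fun j => g ∘ x j with hY_def
  have hgm : Measurable g := by
    apply Measurable.ite _ measurable_const measurable_const
    exact measurableSet_le measurable_abs measurable_const
  have hYm : ∀ j, Measurable (Y j) := fun j => hgm.comp (hXm j)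
  have hsum : ∀ ω, ((Finset.univ.filter fun j => |x j ω| ≤ c).card : ℝ)
      = ∑ j, Y j ω := by
    intro ω
    rw [Finset.card_filter]
    push_cast
    simp [hY_def, hg_def, Function.comp, apply_ite]
  -- step 1 : inclusion of events
  have hincl : {ω | (sInf {s : ℝ |
          q * k ≤ ((Finset.univ.filter fun j => |x j ω| ≤ s).card : ℝ)} / W) ^ α
        ≤ 1 - ε} ⊆ {ω | q * k ≤ ∑ j, Y j ω} := by
    intro ω hω
    simp only [Set.mem_setOf_eq] at hω ⊢
    set S : Set ℝ := {s : ℝ |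
        q * k ≤ ((Finset.univ.filter fun j => |x j ω| ≤ s).card : ℝ)} with hS_def
    by_contra hcon
    push_neg at hcon
    have hconc : ((Finset.univ.filter fun j => |x j ω| ≤ c).card : ℝ) < q * k := by
      rw [hsum ω]; exact hcon
    -- S is nonempty
    have hS_ne : S.Nonempty := by
      refine ⟨∑ j, |x j ω|, ?_⟩
      have hall : ∀ j ∈ Finset.univ, |x j ω| ≤ ∑ i, |x i ω| := fun j _ =>
        Finset.single_le_sum (f := fun i => |x i ω|) (fun i _ => abs_nonneg _)
          (Finset.mem_univ j)
      simp only [hS_def, Set.mem_setOf_eq]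
      rw [Finset.filter_true_of_mem hall]
      simp only [Finset.card_univ, Fintype.card_fin]
      nlinarith [(Nat.cast_pos.mpr hk : (0:ℝ) < k)]
    -- S is bounded below by 0
    have hbdd0 : ∀ s ∈ S, (0:ℝ) ≤ s := by
      intro s hs
      by_contra hneg
      push_neg at hneg
      have : (Finset.univ.filter fun j => |x j ω| ≤ s) = ∅ := by
        apply Finset.filter_false_of_mem
        intro j _
        push_neg
        exact lt_of_lt_of_le hneg (abs_nonneg _)
      simp only [hS_def, Set.mem_setOf_eq, this, Finset.card_empty, Nat.cast_zero] at hs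
      nlinarith [(Nat.cast_pos.mpr hk : (0:ℝ) < k)]
    have hbdd : BddBelow S := ⟨0, hbdd0⟩
    -- sInf S ≤ c
    have hm0 : 0 ≤ sInf S := le_csInf hS_ne hbdd0
    have hmle : sInf S ≤ c := by
      by_contra hgt
      push_neg at hgt
      have hdiv : (1 - ε) ^ (1 / α) < sInf S / W := by
        rw [lt_div_iff₀ hW]; exact hgt
      have h1 : (1 - ε) = ((1 - ε) ^ (1 / α)) ^ α := by
        rw [← Real.rpow_mul (le_of_lt h1ε), one_div,
          inv_mul_cancel₀ (ne_of_gt hα), Real.rpow_one]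
      have h2 : ((1 - ε) ^ (1 / α)) ^ α < (sInf S / W) ^ α :=
        Real.rpow_lt_rpow (le_of_lt (Real.rpow_pos_of_pos h1ε _)) hdiv hα
      rw [← h1] at h2
      linarith
    -- build a lower bound ℓ > c of S
    set T : Finset (Fin k) := Finset.univ.filter fun j => c < |x j ω| with hT_def
    classical
    set ℓ : ℝ := if hT : T.Nonempty then T.inf' hT (fun j => |x j ω|) else c + 1
      with hℓ_def
    have hℓc : c < ℓ := by
      rw [hℓ_def]
      split
      · next hT =>
        rw [Finset.lt_inf'_iff]
        intro j hj
        exact (Finset.mem_filter.mp hj).2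
      · linarith
    have hℓT : ∀ j, c < |x j ω| → ℓ ≤ |x j ω| := by
      intro j hj
      have hjT : j ∈ T := Finset.mem_filter.mpr ⟨Finset.mem_univ j, hj⟩
      rw [hℓ_def, dif_pos ⟨j, hjT⟩]
      exact Finset.inf'_le _ hjT
    have hlow : ∀ s ∈ S, ℓ ≤ s := by
      intro s hs
      by_contra hsl
      push_neg at hsl
      rcases le_or_gt s c with hsc | hcs
      · -- count at s ≤ count at c < q k
        have hmono : (Finset.univ.filter fun j => |x j ω| ≤ s)
            ⊆ (Finset.univ.filter fun j => |x j ω| ≤ c) := by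
          intro j hj
          simp only [Finset.mem_filter] at *
          exact ⟨hj.1, le_trans hj.2 hsc⟩
        have := Finset.card_le_card hmono
        have hs' : q * k ≤ ((Finset.univ.filter fun j => |x j ω| ≤ s).card : ℝ) := hs
        have hcount : ((Finset.univ.filter fun j => |x j ω| ≤ s).card : ℝ)
            ≤ ((Finset.univ.filter fun j => |x j ω| ≤ c).card : ℝ) := by exact_mod_cast this
        linarith
      · -- counts at s and c coincide
        have heq : (Finset.univ.filter fun j => |x j ω| ≤ s)
            = (Finset.univ.filter fun j => |x j ω| ≤ c) := by
          apply Finset.filter_congr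
          intro j _
          constructor
          · intro hjs
            by_contra hjc
            push_neg at hjc
            have := hℓT j hjc
            linarith
          · intro hjc
            linarith
        have hs' : q * k ≤ ((Finset.univ.filter fun j => |x j ω| ≤ s).card : ℝ) := hs
        rw [heq] at hs'
        linarith
    have : ℓ ≤ sInf S := le_csInf hS_ne hlow
    linarith
  refine le_trans (measure_mono hincl) ?_
  -- step 2 : Chernoff bound
  have hμA : ∀ j, μ {ω | |x j ω| ≤ c} = ENNReal.ofReal p := by
    intro j
    have hsplit : {ω | x j ω ≤ c} = {ω | x j ω < -c} ∪ {ω | |x j ω| ≤ c} := by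
      ext ω
      simp only [Set.mem_setOf_eq, Set.mem_union, abs_le]
      constructor
      · intro h
        rcases lt_or_ge (x j ω) (-c) with h' | h'
        · exact Or.inl h'
        · exact Or.inr ⟨h', h⟩
      · rintro (h | ⟨h1, h2⟩)
        · linarith
        · exact h2
    have hdisj : Disjoint {ω | x j ω < -c} {ω | |x j ω| ≤ c} := by
      rw [Set.disjoint_left]
      intro ω h1 h2
      simp only [Set.mem_setOf_eq, abs_le] at h1 h2
      linarith
    have hmeas : MeasurableSet {ω | |x j ω| ≤ c} :=
      measurableSet_le (hXm j).abs measurable_const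
    have hμlt : μ {ω | x j ω < -c} = ENNReal.ofReal (F (-c)) :=
      meas_lt_of_cdf μ (x j) F hFc (hcdf j) (-c)
    have key : μ {ω | x j ω < -c} + μ {ω | |x j ω| ≤ c} = ENNReal.ofReal (F c) := by
      rw [← measure_union hdisj hmeas, ← hsplit, hcdf j]
    rw [hμlt] at key
    have hadd : ENNReal.ofReal (F (-c)) + ENNReal.ofReal p = ENNReal.ofReal (F c) := by
      rw [← ENNReal.ofReal_add _ (le_of_lt hp0)]
      · congr 1
        rw [hsym c, hp, hc_def]
        ring
      · rw [hsym c]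
        rw [hp, hc_def] at hp0
        linarith
    rw [← hadd] at key
    exact (ENNReal.add_right_inj ENNReal.ofReal_ne_top).mp key
  -- independence of indicators
  have hYindep : iIndepFun Y μ :=
    hindep.comp (fun _ => g) (fun _ => hgm)
  -- mgf of each indicator
  set t : ℝ := Real.log (q * (1 - p) / ((1 - q) * p)) with ht_def
  have hratio : 1 ≤ q * (1 - p) / ((1 - q) * p) := by
    rw [le_div_iff₀ (by nlinarith)]
    nlinarith
  have ht0 : 0 ≤ t := Real.log_nonneg hratio
  have hexpt : Real.exp t = q * (1 - p) / ((1 - q) * p) :=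
    Real.exp_log (by nlinarith)
  have hmgf : ∀ j, mgf (Y j) μ t = p * Real.exp t + (1 - p) := by
    intro j
    have heq : (fun ω => Real.exp (t * Y j ω))
        = fun ω => ({ω | |x j ω| ≤ c}.indicator (fun _ => Real.exp t - 1) ω + 1) := by
      funext ω
      by_cases h : |x j ω| ≤ c
      · simp [hY_def, hg_def, Function.comp, h, Set.indicator_of_mem, Set.mem_setOf_eq]
      · simp [hY_def, hg_def, Function.comp, h, Set.indicator_of_notMem, Set.mem_setOf_eq]
    have hmeas : MeasurableSet {ω | |x j ω| ≤ c} :=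
      measurableSet_le (hXm j).abs measurable_const
    rw [mgf, heq]
    rw [integral_add ((integrable_const (Real.exp t - 1)).indicator hmeas)
      (integrable_const 1)]
    rw [integral_indicator_const _ hmeas, integral_const]
    simp only [measure_univ, probReal_univ, ENNReal.toReal_one, one_smul, smul_eq_mul]
    rw [Measure.real, hμA j, ENNReal.toReal_ofReal (le_of_lt hp0)]
    ring
  -- the sum
  set X : Ω → ℝ := ∑ j, Y j with hX_def
  have hXapp : ∀ ω, X ω = ∑ j, Y j ω := by
    intro ω; rw [hX_def]; simp [Finset.sum_apply]
  have hXbound : ∀ ω, 0 ≤ X ω ∧ X ω ≤ k := by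
    intro ω
    rw [hXapp]
    constructor
    · apply Finset.sum_nonneg
      intro j _
      simp only [hY_def, hg_def, Function.comp]
      split <;> norm_num
    · calc ∑ j, Y j ω ≤ ∑ _j : Fin k, (1:ℝ) := by
            apply Finset.sum_le_sum
            intro j _
            simp only [hY_def, hg_def, Function.comp]
            split <;> norm_num
        _ = k := by simp
  have hXm' : Measurable X := by
    have : X = fun ω => ∑ j, Y j ω := funext hXapp
    rw [this]
    exact Finset.measurable_sum _ (fun j _ => hYm j)
  have hint : Integrable (fun ω => Real.exp (t * X ω)) μ := by
    apply Integrable.mono' (integrable_const (Real.exp (|t| * k)))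
    · exact (Real.measurable_exp.comp (hXm'.const_mul t)).aestronglyMeasurable
    · filter_upwards with ω
      rw [Real.norm_eq_abs, abs_of_pos (Real.exp_pos _), Real.exp_le_exp]
      obtain ⟨h0, hk'⟩ := hXbound ω
      calc t * X ω ≤ |t| * X ω := mul_le_mul_of_nonneg_right (le_abs_self t) h0
        _ ≤ |t| * k := mul_le_mul_of_nonneg_left hk' (abs_nonneg t)
  have hmgfX : mgf X μ t = (p * Real.exp t + (1 - p)) ^ k := by
    rw [hX_def, hYindep.mgf_sum hYm Finset.univ]
    simp [hmgf, Finset.prod_const, Finset.card_univ]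
  -- apply the Chernoff bound
  have hB : {ω | q * k ≤ ∑ j, Y j ω} = {ω | q * k ≤ X ω} := by
    ext ω; simp [hXapp]
  rw [hB]
  have hchern := measure_ge_le_exp_mul_mgf (μ := μ) (X := X) (t := t) (q * k) ht0 hint
  rw [hmgfX] at hchern
  -- convert to ENNReal and identify the bound
  have hfin : μ {ω | q * k ≤ X ω} ≠ ⊤ := measure_ne_top μ _
  rw [← ENNReal.ofReal_toReal hfin]
  apply ENNReal.ofReal_le_ofReal
  refine le_trans hchern (le_of_eq ?_)
  -- algebraic identification of the exponent
  have hqne : (1:ℝ) - q ≠ 0 := by linarith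
  have hpne : p ≠ 0 := ne_of_gt hp0
  have hpe : p * Real.exp t + (1 - p) = (1 - p) / (1 - q) := by
    rw [hexpt]
    field_simp
    ring
  have hpq1 : 0 < (1 - p) / (1 - q) := by
    apply div_pos <;> linarith
  rw [hpe, ← Real.exp_log hpq1, ← Real.exp_nat_mul, ← Real.exp_add]
  congr 1
  have hlt : t = Real.log q + Real.log (1 - p) - (Real.log (1 - q) + Real.log p) := by
    rw [ht_def, Real.log_div (by nlinarith) (by nlinarith),
      Real.log_mul (ne_of_gt hq0) (by linarith),
      Real.log_mul (by linarith) (ne_of_gt hp0)]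
    try ring
  rw [hlt, Real.log_div (by linarith) (by linarith),
    Real.log_div (ne_of_gt hq0) (ne_of_gt hp0),
    Real.log_div (by linarith) (by linarith)]
  ring
end
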